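/- Let n ≥ 1, δ > 0, α > 0. Define h_δ : ℝ → ℝ by h_δ(z) = z²/2 if z ≥ −δ and h_δ(z) = −δz − δ²/2 if z < −δ, and define f : ℝⁿ → ℝ by f(x) = Σ_{i=1}^{n} i·h_δ(x_i) + (α/2)·‖x‖². Then f is α-strongly convex, f is differentiable with (n + α)-Lipschitz gradient, and x = 0 is the unique minimizer of f. -/

import Mathlib

open Filter Topology InnerProductSpace

lemma hd_hasDerivAt (δ : ℝ) (h : ℝ → ℝ)
    (hh : ∀ z, h z = if -δ ≤ z then z ^ 2 / 2 else -δ * z - δ ^ 2 / 2) (z : ℝ) :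
    HasDerivAt h (max z (-δ)) z := by
  rcases lt_trichotomy z (-δ) with hz | hz | hz
  · rw [max_eq_right hz.le]
    have hd : HasDerivAt (fun w : ℝ => -δ * w - δ ^ 2 / 2) (-δ) z := by
      simpa using ((hasDerivAt_id z).const_mul (-δ)).sub_const (δ ^ 2 / 2)
    refine hd.congr_of_eventuallyEq ?_
    filter_upwards [Iio_mem_nhds hz] with w hw
    rw [hh w, if_neg (not_le.2 hw)]
  · subst hz
    rw [max_self, hasDerivAt_iff_tendsto_slope, ← tendsto_sub_nhds_zero_iff]
    apply squeeze_zero_norm'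
    · filter_upwards [self_mem_nhdsWithin] with w hw
      have hw' : w ≠ -δ := hw
      show ‖slope h (-δ) w - (-δ)‖ ≤ |w + δ| / 2
      rcases le_or_gt (-δ) w with hle | hlt
      · have hne : w + δ ≠ 0 := by
          intro hc; apply hw'; linarith
        have : slope h (-δ) w - (-δ) = (w + δ) / 2 := by
          rw [slope_def_field, hh w, hh (-δ), if_pos hle, if_pos le_rfl]
          field_simp
          ring
        rw [this, Real.norm_eq_abs, abs_div, abs_two]
      · have hne : w + δ ≠ 0 := by intro hc; nlinarith
        have : slope h (-δ) w - (-δ) = 0 := by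
          rw [slope_def_field, hh w, hh (-δ), if_neg (not_le.2 hlt), if_pos le_rfl]
          field_simp
          ring
        rw [this]
        simp
        positivity
    · have : Tendsto (fun w : ℝ => |w + δ| / 2) (𝓝 (-δ)) (𝓝 (|(-δ) + δ| / 2)) :=
        ((continuous_abs.comp (continuous_id.add continuous_const)).div_const 2).tendsto _
      simp only [neg_add_cancel, abs_zero, zero_div] at this
      exact this.mono_left nhdsWithin_le_nhds
  · rw [max_eq_left hz.le]
    have hd : HasDerivAt (fun w : ℝ => w ^ 2 / 2) z z := by
      simpa using (hasDerivAt_pow 2 z).div_const 2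
    refine hd.congr_of_eventuallyEq ?_
    filter_upwards [Ioi_mem_nhds hz] with w hw
    rw [hh w, if_pos (le_of_lt hw)]

set_option maxHeartbeats 1000000 in
theorem stmt14
    (n : ℕ) (hn : 1 ≤ n) (δ α : ℝ) (hδpos : 0 < δ) (hα : 0 < α)
    (hδfun : ℝ → ℝ)
    (hhδ : ∀ z : ℝ, hδfun z = if -δ ≤ z then z ^ 2 / 2 else -δ * z - δ ^ 2 / 2)
    (f : EuclideanSpace ℝ (Fin n) → ℝ)
    (hf : ∀ x : EuclideanSpace ℝ (Fin n),
      f x = (∑ i : Fin n, ((i : ℕ) + 1 : ℝ) * hδfun (x i)) + α / 2 * ‖x‖ ^ 2) :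
    ConvexOn ℝ Set.univ (fun x : EuclideanSpace ℝ (Fin n) => f x - α / 2 * ‖x‖ ^ 2) ∧
    Differentiable ℝ f ∧
    (∀ a b : EuclideanSpace ℝ (Fin n),
      ‖gradient f a - gradient f b‖ ≤ ((n : ℝ) + α) * ‖a - b‖) ∧
    IsMinOn f Set.univ 0 ∧
    (∀ z : EuclideanSpace ℝ (Fin n), IsMinOn f Set.univ z → z = 0) := by
  have haskey : ∀ z, HasDerivAt hδfun (max z (-δ)) z := hd_hasDerivAt δ hδfun hhδ
  set φ' : Fin n → ℝ → ℝ := fun i z => ((i : ℕ) + 1 : ℝ) * max z (-δ) + α * z with hφ'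
  set G : EuclideanSpace ℝ (Fin n) → EuclideanSpace ℝ (Fin n) :=
    fun x => (EuclideanSpace.equiv (Fin n) ℝ).symm (fun i => φ' i (x i)) with hG
  have hGapp : ∀ (x : EuclideanSpace ℝ (Fin n)) (i : Fin n), G x i = φ' i (x i) := fun x i => rfl
  have hf' : ∀ x : EuclideanSpace ℝ (Fin n),
      f x = ∑ i : Fin n, (((i : ℕ) + 1 : ℝ) * hδfun (x i) + α / 2 * (x i) ^ 2) := by
    intro x
    rw [hf x, Finset.sum_add_distrib]
    congr 1
    rw [← Finset.mul_sum]
    congr 1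
    rw [PiLp.norm_sq_eq_of_L2]
    congr 1
    ext i
    rw [Real.norm_eq_abs, sq_abs]
  have hgrad : ∀ x : EuclideanSpace ℝ (Fin n), HasGradientAt f (G x) x := by
    intro x
    have hterm : ∀ i : Fin n, HasFDerivAt
        (fun y : EuclideanSpace ℝ (Fin n) => ((i : ℕ) + 1 : ℝ) * hδfun (y i) + α / 2 * (y i) ^ 2)
        ((φ' i (x i)) • (EuclideanSpace.proj i : EuclideanSpace ℝ (Fin n) →L[ℝ] ℝ)) x := by
      intro i
      have h1 : HasDerivAt (fun z : ℝ => ((i : ℕ) + 1 : ℝ) * hδfun z + α / 2 * z ^ 2)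
          (φ' i (x i)) (x i) := by
        have h2 := ((haskey (x i)).const_mul ((i : ℕ) + 1 : ℝ)).fun_add
          (((hasDerivAt_pow 2 (x i)).const_mul (α / 2)))
        refine h2.congr_deriv ?_
        simp [hφ']
        ring
      have hp : HasFDerivAt (fun y : EuclideanSpace ℝ (Fin n) => y i)
          (EuclideanSpace.proj i : EuclideanSpace ℝ (Fin n) →L[ℝ] ℝ) x :=
        (EuclideanSpace.proj i : EuclideanSpace ℝ (Fin n) →L[ℝ] ℝ).hasFDerivAt
      exact h1.comp_hasFDerivAt x hp
    have hsum : HasFDerivAt f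
        (∑ i : Fin n, (φ' i (x i)) • (EuclideanSpace.proj i : EuclideanSpace ℝ (Fin n) →L[ℝ] ℝ))
        x := by
      have hs := HasFDerivAt.fun_sum (u := Finset.univ) (fun i _ => hterm i)
      have hfe : f = fun y : EuclideanSpace ℝ (Fin n) => ∑ i : Fin n,
          (((i : ℕ) + 1 : ℝ) * hδfun (y i) + α / 2 * (y i) ^ 2) := funext hf'
      rw [hfe]
      exact hs
    have hxt : (∑ i : Fin n,
        (φ' i (x i)) • (EuclideanSpace.proj i : EuclideanSpace ℝ (Fin n) →L[ℝ] ℝ))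
        = toDual ℝ (EuclideanSpace ℝ (Fin n)) (G x) := by
      apply ContinuousLinearMap.ext
      intro v
      rw [toDual_apply_apply]
      simp [PiLp.inner_apply, RCLike.inner_apply, hGapp]
      exact Finset.sum_congr rfl fun _ _ => mul_comm _ _
    rw [HasGradientAt, HasGradientAtFilter, ← hxt]
    exact hsum
  have hδnn : ∀ z, 0 ≤ hδfun z := by
    intro z
    rw [hhδ z]
    split
    · positivity
    · rename_i hlt
      push_neg at hlt
      nlinarith
  have hδ0 : hδfun 0 = 0 := by
    rw [hhδ 0, if_pos (by linarith)]
    norm_num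
  have hlow : ∀ x : EuclideanSpace ℝ (Fin n), α / 2 * ‖x‖ ^ 2 ≤ f x := by
    intro x
    rw [hf x]
    have : (0:ℝ) ≤ ∑ i : Fin n, ((i : ℕ) + 1 : ℝ) * hδfun (x i) :=
      Finset.sum_nonneg fun i _ => mul_nonneg (by positivity) (hδnn _)
    linarith
  have hf0 : f 0 = 0 := by
    rw [hf 0]
    simp [hδ0]
  refine ⟨?_, fun x => (hgrad x).hasFDerivAt.differentiableAt, ?_, ?_, ?_⟩
  · -- convexity
    have hfe2 : (fun x : EuclideanSpace ℝ (Fin n) => f x - α / 2 * ‖x‖ ^ 2)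
        = fun x => ∑ i : Fin n, ((i : ℕ) + 1 : ℝ) * hδfun (x i) := by
      funext x
      rw [hf x]
      ring
    rw [hfe2]
    have hconv1 : ConvexOn ℝ Set.univ hδfun := by
      refine Monotone.convexOn_univ_of_deriv (fun z => (haskey z).differentiableAt) ?_
      intro a b hab
      rw [(haskey a).deriv, (haskey b).deriv]
      exact max_le_max hab le_rfl
    refine ⟨convex_univ, fun x _ y _ a b ha hb hab => ?_⟩
    have hle : ∀ i : Fin n, ((i : ℕ) + 1 : ℝ) * hδfun ((a • x + b • y) i) ≤
        a * (((i : ℕ) + 1 : ℝ) * hδfun (x i)) + b * (((i : ℕ) + 1 : ℝ) * hδfun (y i)) := by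
      intro i
      have hcoord : (a • x + b • y) i = a * x i + b * y i := rfl
      have hcv := hconv1.2 (Set.mem_univ (x i)) (Set.mem_univ (y i)) ha hb hab
      rw [smul_eq_mul, smul_eq_mul, smul_eq_mul, smul_eq_mul] at hcv
      have hc : (0:ℝ) ≤ (i : ℕ) + 1 := by positivity
      rw [hcoord]
      nlinarith [mul_le_mul_of_nonneg_left hcv hc]
    calc (∑ i : Fin n, ((i : ℕ) + 1 : ℝ) * hδfun ((a • x + b • y) i))
        ≤ ∑ i : Fin n, (a * (((i : ℕ) + 1 : ℝ) * hδfun (x i))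
            + b * (((i : ℕ) + 1 : ℝ) * hδfun (y i))) :=
          Finset.sum_le_sum fun i _ => hle i
      _ = a • (∑ i : Fin n, ((i : ℕ) + 1 : ℝ) * hδfun (x i))
            + b • (∑ i : Fin n, ((i : ℕ) + 1 : ℝ) * hδfun (y i)) := by
          rw [Finset.sum_add_distrib, ← Finset.mul_sum, ← Finset.mul_sum]
          simp [smul_eq_mul]
  · -- Lipschitz gradient
    intro p q
    rw [(hgrad p).gradient, (hgrad q).gradient]
    have hnorm : ∀ u : EuclideanSpace ℝ (Fin n), ‖u‖ = Real.sqrt (∑ i : Fin n, (u i) ^ 2) := by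
      intro u
      rw [EuclideanSpace.norm_eq]
      congr 1
      apply Finset.sum_congr rfl
      intro i _
      rw [Real.norm_eq_abs, sq_abs]
    have key : ∀ i : Fin n, ((G p - G q) i) ^ 2 ≤ ((n : ℝ) + α) ^ 2 * ((p - q) i) ^ 2 := by
      intro i
      have h1 : (G p - G q) i = φ' i (p i) - φ' i (q i) := by
        rw [PiLp.sub_apply, hGapp, hGapp]
      have h2 : (p - q) i = p i - q i := rfl
      rw [h1, h2]
      have hmax : |max (p i) (-δ) - max (q i) (-δ)| ≤ |p i - q i| := abs_max_sub_max_le_abs _ _ _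
      have hci : ((i : ℕ) + 1 : ℝ) ≤ (n : ℝ) := by exact_mod_cast i.is_lt
      have hc0 : (0:ℝ) ≤ (i : ℕ) + 1 := by positivity
      have habs : |φ' i (p i) - φ' i (q i)| ≤ ((n : ℝ) + α) * |p i - q i| := by
        have hrw : φ' i (p i) - φ' i (q i)
            = ((i : ℕ) + 1 : ℝ) * (max (p i) (-δ) - max (q i) (-δ)) + α * (p i - q i) := by
          simp only [hφ']
          ring
        rw [hrw]
        calc |((i : ℕ) + 1 : ℝ) * (max (p i) (-δ) - max (q i) (-δ)) + α * (p i - q i)|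
            ≤ |((i : ℕ) + 1 : ℝ) * (max (p i) (-δ) - max (q i) (-δ))| + |α * (p i - q i)| :=
              abs_add_le _ _
          _ = (((i : ℕ) + 1 : ℝ)) * |max (p i) (-δ) - max (q i) (-δ)| + α * |p i - q i| := by
              rw [abs_mul, abs_mul, abs_of_nonneg hc0, abs_of_nonneg hα.le]
          _ ≤ ((n : ℝ) + α) * |p i - q i| := by
              nlinarith [abs_nonneg (p i - q i), abs_nonneg (max (p i) (-δ) - max (q i) (-δ))]
      nlinarith [sq_abs (φ' i (p i) - φ' i (q i)), sq_abs (p i - q i),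
        abs_nonneg (φ' i (p i) - φ' i (q i)), abs_nonneg (p i - q i),
        mul_self_le_mul_self (abs_nonneg _) habs, hα.le, show (1:ℝ) ≤ (n:ℝ) by exact_mod_cast hn]
    have hna : (0:ℝ) ≤ (n : ℝ) + α := by positivity
    rw [hnorm, hnorm]
    calc Real.sqrt (∑ i : Fin n, ((G p - G q) i) ^ 2)
        ≤ Real.sqrt (((n : ℝ) + α) ^ 2 * ∑ i : Fin n, ((p - q) i) ^ 2) := by
          apply Real.sqrt_le_sqrt
          rw [Finset.mul_sum]
          exact Finset.sum_le_sum fun i _ => key i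
      _ = ((n : ℝ) + α) * Real.sqrt (∑ i : Fin n, ((p - q) i) ^ 2) := by
          rw [Real.sqrt_mul (sq_nonneg _), Real.sqrt_sq hna]
  · -- min at 0
    rw [isMinOn_iff]
    intro x _
    rw [hf0]
    have h0 : (0:ℝ) ≤ α / 2 * ‖x‖ ^ 2 := by positivity
    linarith [hlow x]
  · -- uniqueness
    intro z hz
    have h1 : f z ≤ f 0 := (isMinOn_iff.1 hz) 0 (Set.mem_univ 0)
    rw [hf0] at h1
    have h2 := hlow z
    have h3 : ‖z‖ = 0 := by
      by_contra hne
      have hpos : 0 < ‖z‖ := (norm_nonneg z).lt_of_ne (Ne.symm hne)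
      nlinarith [mul_pos (half_pos hα) (pow_pos hpos 2)]
    exact norm_eq_zero.mp h3
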